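/- The Rees algebra k[[x,y,z]][ft, gt], i.e., the subring of the polynomial ring k[[x,y,z]][t] generated over k[[x,y,z]] by ft and gt, is not integrally closed in its field of fractions: the element ξt, where ξ = (y−α)(z−β), is integral over k[[x,y,z]][ft,gt] (since (ξt)² = (ft)(gt)) but does not belong to k[[x,y,z]][ft,gt]. -/

import Mathlib

set_option synthInstance.maxHeartbeats 1000000
set_option maxHeartbeats 2000000

noncomputable section

variable (k : Type) [Field k]

/-- `k[[x,y,z]]`, realized as the iterated power series ring `k[[z]][[y]][[x]]`. -/
abbrev T3 (k : Type) [Field k] := PowerSeries (PowerSeries (PowerSeries k))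

/-- `x ∈ k[[x,y,z]]`. -/
def xT : T3 k := PowerSeries.X
/-- `y ∈ k[[x,y,z]]`. -/
def yT : T3 k := PowerSeries.C (R := _) PowerSeries.X
/-- `z ∈ k[[x,y,z]]`. -/
def zT : T3 k := PowerSeries.C (R := _) (PowerSeries.C (R := _) PowerSeries.X)

/-- The inclusion `k ⊆ k[[x,y,z]]`. -/
def kT : k →+* T3 k :=
  (PowerSeries.C (R := _)).comp ((PowerSeries.C (R := _)).comp (PowerSeries.C (R := k)))

/-- The inclusion `k[[x]] ⊆ k[[x,y,z]]`. -/
def embT : PowerSeries k →+* T3 k :=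
  PowerSeries.map ((PowerSeries.C (R := _)).comp (PowerSeries.C (R := k)))

/-- `f = (y - α)²` as an element of `k[[x,y,z]]`. -/
def fT (α : PowerSeries k) : T3 k := (yT k - embT k α) ^ 2
/-- `g = (z - β)²` as an element of `k[[x,y,z]]`. -/
def gT (β : PowerSeries k) : T3 k := (zT k - embT k β) ^ 2

open Polynomial in
/-- The Rees algebra `k[[x,y,z]][ft, gt]`, the subring of `k[[x,y,z]][t]` generated by
`k[[x,y,z]]` together with `ft` and `gt`. -/
def Rees (α β : PowerSeries k) : Subring (Polynomial (T3 k)) :=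
  Subring.closure (Set.range (Polynomial.C : T3 k →+* Polynomial (T3 k)) ∪
    {Polynomial.C (fT k α) * Polynomial.X, Polynomial.C (gT k β) * Polynomial.X})

/- ### Auxiliary lemmas -/

lemma aux_core : (PowerSeries.X * PowerSeries.C (R := PowerSeries k) PowerSeries.X :
    PowerSeries (PowerSeries k)) ∉
    Ideal.span {(PowerSeries.X : PowerSeries (PowerSeries k))^2,
      (PowerSeries.C (R := PowerSeries k) PowerSeries.X)^2} := by
  intro h
  obtain ⟨u, v, huv⟩ := Ideal.mem_span_pair.mp h
  have h1 := congrArg (PowerSeries.coeff (R := PowerSeries k) 1) huv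
  simp only [map_add] at h1
  have e1 : (PowerSeries.coeff (R := PowerSeries k) 1) (u * PowerSeries.X ^ 2) = 0 := by
    rw [pow_two, ← mul_assoc, PowerSeries.coeff_succ_mul_X]
    rw [show (0:ℕ) = 0 from rfl, PowerSeries.coeff_zero_eq_constantCoeff]
    simp
  have e2 : (PowerSeries.coeff (R := PowerSeries k) 1)
        (v * (PowerSeries.C (R := PowerSeries k) PowerSeries.X) ^ 2)
      = (PowerSeries.coeff (R := PowerSeries k) 1) v * PowerSeries.X ^ 2 := by
    rw [← map_pow, PowerSeries.coeff_mul_C]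
  have e3 : (PowerSeries.coeff (R := PowerSeries k) 1)
        (PowerSeries.X * PowerSeries.C (R := PowerSeries k) PowerSeries.X)
      = PowerSeries.X := by
    rw [PowerSeries.coeff_mul_C, PowerSeries.coeff_one_X, one_mul]
  rw [e1, e2, e3, zero_add] at h1
  have h2 := congrArg (PowerSeries.coeff (R := k) 1) h1
  rw [pow_two, ← mul_assoc, PowerSeries.coeff_succ_mul_X,
    PowerSeries.coeff_zero_eq_constantCoeff] at h2
  simp at h2

lemma aux_cc_emb (α : PowerSeries k) (hα : PowerSeries.constantCoeff (R := k) α = 0) :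
    PowerSeries.constantCoeff (R := _) (embT k α) = 0 := by
  rw [embT, ← PowerSeries.coeff_zero_eq_constantCoeff_apply, PowerSeries.coeff_map,
    PowerSeries.coeff_zero_eq_constantCoeff_apply, hα]
  simp

lemma aux_cc_y (α : PowerSeries k) (hα : PowerSeries.constantCoeff (R := k) α = 0) :
    PowerSeries.constantCoeff (R := _) (yT k - embT k α) = PowerSeries.X := by
  rw [map_sub, aux_cc_emb k α hα, yT, PowerSeries.constantCoeff_C, sub_zero]

lemma aux_cc_z (β : PowerSeries k) (hβ : PowerSeries.constantCoeff (R := k) β = 0) :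
    PowerSeries.constantCoeff (R := _) (zT k - embT k β)
      = PowerSeries.C (R := _) PowerSeries.X := by
  rw [map_sub, aux_cc_emb k β hβ, zT, PowerSeries.constantCoeff_C, sub_zero]

lemma aux_xi_not_in_ideal (α β : PowerSeries k)
    (hα : PowerSeries.constantCoeff (R := k) α = 0) (hβ : PowerSeries.constantCoeff (R := k) β = 0) :
    (yT k - embT k α) * (zT k - embT k β) ∉ Ideal.span {fT k α, gT k β} := by
  intro h
  obtain ⟨u, v, huv⟩ := Ideal.mem_span_pair.mp h
  have h1 := congrArg (PowerSeries.constantCoeff (R := _)) huv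
  rw [map_add, map_mul, map_mul, map_mul, fT, gT, map_pow, map_pow,
    aux_cc_y k α hα, aux_cc_z k β hβ] at h1
  exact aux_core k (Ideal.mem_span_pair.mpr
    ⟨PowerSeries.constantCoeff (R := _) u, PowerSeries.constantCoeff (R := _) v, h1⟩)

open Polynomial in
lemma aux_coeff_one_mem (α β : PowerSeries k) {p : Polynomial (T3 k)}
    (hp : p ∈ Rees k α β) :
    p.coeff 1 ∈ Ideal.span {fT k α, gT k β} := by
  set I := Ideal.span {fT k α, gT k β}
  let S : Subring (Polynomial (T3 k)) :=
  { carrier := {q | q.coeff 1 ∈ I}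
    one_mem' := by simp [Polynomial.coeff_one]
    zero_mem' := by simp
    add_mem' := fun ha hb => by
      simpa [Polynomial.coeff_add] using Ideal.add_mem I ha hb
    neg_mem' := fun ha => by
      simp only [Set.mem_setOf_eq, Polynomial.coeff_neg]
      exact Submodule.neg_mem _ ha
    mul_mem' := by
      intro a b ha hb
      have : (a * b).coeff 1 = a.coeff 0 * b.coeff 1 + a.coeff 1 * b.coeff 0 := by
        rw [Polynomial.coeff_mul, show Finset.HasAntidiagonal.antidiagonal 1 = {(0,1),(1,0)} from rfl,
          Finset.sum_pair (by decide)]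
      simp only [Set.mem_setOf_eq, this]
      exact Ideal.add_mem I (Ideal.mul_mem_left I _ hb) (Ideal.mul_mem_right _ I ha) }
  have hle : Rees k α β ≤ S := by
    apply Subring.closure_le.mpr
    rintro q (⟨a, rfl⟩ | hq)
    · show (Polynomial.C a).coeff 1 ∈ I
      simp [Polynomial.coeff_C]
    · rcases hq with rfl | rfl
      · show (Polynomial.C (fT k α) * Polynomial.X).coeff 1 ∈ I
        rw [Polynomial.coeff_C_mul, Polynomial.coeff_X_one, mul_one]
        exact Ideal.subset_span (by simp)
      · show (Polynomial.C (gT k β) * Polynomial.X).coeff 1 ∈ I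
        rw [Polynomial.coeff_C_mul, Polynomial.coeff_X_one, mul_one]
        exact Ideal.subset_span (by simp)
  exact hle hp

open Polynomial in
lemma aux_xit_not_mem (α β : PowerSeries k)
    (hα : PowerSeries.constantCoeff (R := k) α = 0) (hβ : PowerSeries.constantCoeff (R := k) β = 0) :
    Polynomial.C ((yT k - embT k α) * (zT k - embT k β)) * Polynomial.X ∉ Rees k α β := by
  intro h
  have := aux_coeff_one_mem k α β h
  rw [Polynomial.coeff_C_mul, Polynomial.coeff_X_one, mul_one] at this
  exact aux_xi_not_in_ideal k α β hα hβ this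

open Polynomial in
/-- The Rees algebra `k[[x,y,z]][ft, gt]` is not integrally closed in its
field of fractions: `ξt` (where `ξ = (y-α)(z-β)`) satisfies `(ξt)² = (ft)(gt)`, so it is
integral over the Rees algebra, but it does not belong to it. -/
theorem rees_algebra_not_integrally_closed (α β : PowerSeries k)
    (hα : PowerSeries.constantCoeff (R := k) α = 0) (hβ : PowerSeries.constantCoeff (R := k) β = 0) :
    (Polynomial.C ((yT k - embT k α) * (zT k - embT k β)) * Polynomial.X) ^ 2 =
      (Polynomial.C (fT k α) * Polynomial.X) * (Polynomial.C (gT k β) * Polynomial.X) ∧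
    RingHom.IsIntegralElem (Rees k α β).subtype
      (Polynomial.C ((yT k - embT k α) * (zT k - embT k β)) * Polynomial.X) ∧
    Polynomial.C ((yT k - embT k α) * (zT k - embT k β)) * Polynomial.X ∉ Rees k α β ∧
    ¬ IsIntegrallyClosed (Rees k α β) := by
  set P := Polynomial (T3 k)
  set ξt : P := Polynomial.C ((yT k - embT k α) * (zT k - embT k β)) * Polynomial.X with hξt
  -- Part 1
  have part1 : ξt ^ 2 =
      (Polynomial.C (fT k α) * Polynomial.X) * (Polynomial.C (gT k β) * Polynomial.X) := by
    simp only [hξt, fT, gT, mul_pow, map_mul, map_pow]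
    ring
  -- membership helpers
  have hCmem : ∀ a : T3 k, (Polynomial.C a : P) ∈ Rees k α β := fun a =>
    Subring.subset_closure (Or.inl ⟨a, rfl⟩)
  have hFmem : (Polynomial.C (fT k α) * Polynomial.X : P) ∈ Rees k α β :=
    Subring.subset_closure (Or.inr (by left; rfl))
  have hGmem : (Polynomial.C (gT k β) * Polynomial.X : P) ∈ Rees k α β :=
    Subring.subset_closure (Or.inr (by right; rfl))
  have hFGmem : (Polynomial.C (fT k α) * Polynomial.X) *
      (Polynomial.C (gT k β) * Polynomial.X) ∈ Rees k α β :=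
    Subring.mul_mem _ hFmem hGmem
  -- Part 2
  have part2 : RingHom.IsIntegralElem (Rees k α β).subtype ξt := by
    refine ⟨Polynomial.X ^ 2 - Polynomial.C ⟨_, hFGmem⟩, ?_, ?_⟩
    · exact (Polynomial.monic_X_pow 2).sub_of_left
        (lt_of_le_of_lt (Polynomial.degree_C_le) (by rw [Polynomial.degree_X_pow]; norm_num))
    · rw [Polynomial.eval₂_sub, Polynomial.eval₂_pow, Polynomial.eval₂_X,
        Polynomial.eval₂_C]
      exact sub_eq_zero.mpr part1
  -- Part 3
  have part3 : ξt ∉ Rees k α β := aux_xit_not_mem k α β hα hβ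
  refine ⟨part1, part2, part3, ?_⟩
  -- Part 4
  intro hIC
  set R := Rees k α β
  have hy0 : (yT k - embT k α) ≠ 0 := by
    intro h
    have := aux_cc_y k α hα
    rw [h, map_zero] at this
    exact PowerSeries.X_ne_zero this.symm
  have hCy0 : (Polynomial.C (yT k - embT k α) : P) ≠ 0 := by
    intro h
    exact hy0 (Polynomial.C_injective (by rw [h, map_zero]))
  let den : R := ⟨Polynomial.C (yT k - embT k α), hCmem _⟩
  let num : R := ⟨Polynomial.C (fT k α) * Polynomial.X * Polynomial.C (zT k - embT k β),
    Subring.mul_mem _ hFmem (hCmem _)⟩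
  let w : R := ⟨_, hFGmem⟩
  have hden0 : den ≠ 0 := fun h => hCy0 (congrArg Subtype.val h)
  have hdenU : den ∈ nonZeroDivisors R := mem_nonZeroDivisors_of_ne_zero hden0
  set K := FractionRing R
  have halgInj : Function.Injective (algebraMap R K) := IsFractionRing.injective R K
  have haden0 : algebraMap R K den ≠ 0 := fun h => hden0 (halgInj (by simpa using h))
  let q : K := IsLocalization.mk' K num ⟨den, hdenU⟩
  have hq : q * algebraMap R K den = algebraMap R K num := IsLocalization.mk'_spec K num _
  -- num² = w * den²
  have hkey : num ^ 2 = w * den ^ 2 := by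
    apply Subtype.ext
    show (Polynomial.C (fT k α) * Polynomial.X * Polynomial.C (zT k - embT k β) : P) ^ 2
      = (Polynomial.C (fT k α) * Polynomial.X) * (Polynomial.C (gT k β) * Polynomial.X) *
        (Polynomial.C (yT k - embT k α)) ^ 2
    simp only [fT, gT, map_pow, mul_pow]
    ring
  have hq2 : q ^ 2 = algebraMap R K w := by
    have h2 : q ^ 2 * (algebraMap R K den) ^ 2
        = algebraMap R K w * (algebraMap R K den) ^ 2 := by
      rw [← mul_pow, hq, ← map_pow, hkey, map_mul, map_pow]
    exact mul_right_cancel₀ (pow_ne_zero 2 haden0) h2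
  have hint : IsIntegral R q := by
    refine ⟨Polynomial.X ^ 2 - Polynomial.C w, ?_, ?_⟩
    · exact (Polynomial.monic_X_pow 2).sub_of_left
        (lt_of_le_of_lt (Polynomial.degree_C_le) (by rw [Polynomial.degree_X_pow]; norm_num))
    · simp only [Polynomial.eval₂_sub, Polynomial.eval₂_pow, Polynomial.eval₂_X,
        Polynomial.eval₂_C, hq2, sub_self]
  obtain ⟨r, hr⟩ := IsIntegrallyClosed.isIntegral_iff.mp hint
  have hrden : r * den = num := by
    apply halgInj
    rw [map_mul, hr, hq]
  have hrP : (r : P) * Polynomial.C (yT k - embT k α)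
      = Polynomial.C (fT k α) * Polynomial.X * Polynomial.C (zT k - embT k β) :=
    congrArg Subtype.val hrden
  have hfactor : (Polynomial.C (fT k α) * Polynomial.X * Polynomial.C (zT k - embT k β) : P)
      = ξt * Polynomial.C (yT k - embT k α) := by
    simp only [hξt, fT, map_pow, map_mul]
    ring
  rw [hfactor] at hrP
  have : (r : P) = ξt := mul_right_cancel₀ hCy0 hrP
  exact part3 (this ▸ r.2)
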